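/- Define h, k : (0, π) → ℝ by h(λ) = sin(λ)/λ and k(λ) = sin(λ) − λ·cos(λ). Then the function λ ↦ h(λ)·k(λ)/λ³ is positive on (0, π) and strictly decreasing on (0, π): for all 0 < λ₁ < λ₂ < π one has h(λ₂)k(λ₂)/λ₂³ < h(λ₁)k(λ₁)/λ₁³. -/

import Mathlib

open Real Set

private lemma k_pos : ∀ x ∈ Set.Ioo (0:ℝ) Real.pi, 0 < Real.sin x - x * Real.cos x := by
  have hmono : StrictMonoOn (fun x : ℝ => Real.sin x - x * Real.cos x) (Set.Icc 0 Real.pi) := by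
    apply strictMonoOn_of_deriv_pos (convex_Icc 0 Real.pi)
    · fun_prop
    · intro x hx
      rw [interior_Icc] at hx
      have hd : HasDerivAt (fun x : ℝ => Real.sin x - x * Real.cos x)
          (Real.cos x - (1 * Real.cos x + x * (-Real.sin x))) x :=
        (Real.hasDerivAt_sin x).sub ((hasDerivAt_id x).mul (Real.hasDerivAt_cos x))
      rw [hd.deriv]
      have := Real.sin_pos_of_pos_of_lt_pi hx.1 hx.2
      nlinarith [hx.1]
  intro x hx
  have := hmono (Set.left_mem_Icc.2 Real.pi_pos.le)
    ⟨hx.1.le, hx.2.le⟩ hx.1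
  simpa using this

private lemma m_neg : ∀ x ∈ Set.Ioo (0:ℝ) Real.pi,
    (x ^ 2 - 3) * Real.sin x + 3 * x * Real.cos x < 0 := by
  have hanti : StrictAntiOn (fun x : ℝ => (x ^ 2 - 3) * Real.sin x + 3 * x * Real.cos x)
      (Set.Icc 0 Real.pi) := by
    apply strictAntiOn_of_deriv_neg (convex_Icc 0 Real.pi)
    · fun_prop
    · intro x hx
      rw [interior_Icc] at hx
      have h1 := (((hasDerivAt_pow 2 x).sub_const 3).mul (Real.hasDerivAt_sin x))
      have h2 : HasDerivAt (fun x : ℝ => 3 * x * Real.cos x)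
          (3 * Real.cos x + 3 * x * (-Real.sin x)) x := by
        have := ((hasDerivAt_id x).const_mul 3).mul (Real.hasDerivAt_cos x)
        exact this.congr_deriv (by simp only [mul_one, id_eq])
      have hd := h1.add h2
      rw [show deriv (fun x : ℝ => (x ^ 2 - 3) * Real.sin x + 3 * x * Real.cos x) x = _ from hd.deriv]
      have hk := k_pos x hx
      push_cast
      nlinarith [hx.1]
  intro x hx
  have := hanti (Set.left_mem_Icc.2 Real.pi_pos.le) ⟨hx.1.le, hx.2.le⟩ hx.1
  simpa using this

private lemma A_anti : StrictAntiOn (fun x : ℝ => Real.sin x / x) (Set.Ioo 0 Real.pi) := by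
  apply strictAntiOn_of_deriv_neg (convex_Ioo 0 Real.pi)
  · apply ContinuousOn.div Real.continuous_sin.continuousOn continuousOn_id
    intro x hx; exact ne_of_gt hx.1
  · intro x hx
    rw [interior_Ioo] at hx
    have hx0 : x ≠ 0 := ne_of_gt hx.1
    have hd : HasDerivAt (fun x : ℝ => Real.sin x / x)
        ((Real.cos x * x - Real.sin x * 1) / x ^ 2) x :=
      (Real.hasDerivAt_sin x).div (hasDerivAt_id x) hx0
    rw [hd.deriv]
    have hk := k_pos x hx
    apply div_neg_of_neg_of_pos
    · nlinarith
    · exact pow_pos hx.1 2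

private lemma B_anti : StrictAntiOn (fun x : ℝ => (Real.sin x - x * Real.cos x) / x ^ 3)
    (Set.Ioo 0 Real.pi) := by
  apply strictAntiOn_of_deriv_neg (convex_Ioo 0 Real.pi)
  · apply ContinuousOn.div (by fun_prop) (by fun_prop)
    intro x hx; exact ne_of_gt (pow_pos hx.1 3)
  · intro x hx
    rw [interior_Ioo] at hx
    have hx0 : x ≠ 0 := ne_of_gt hx.1
    have hnum : HasDerivAt (fun x : ℝ => Real.sin x - x * Real.cos x)
        (Real.cos x - (1 * Real.cos x + x * (-Real.sin x))) x :=
      (Real.hasDerivAt_sin x).sub ((hasDerivAt_id x).mul (Real.hasDerivAt_cos x))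
    have hden : HasDerivAt (fun x : ℝ => x ^ 3) (3 * x ^ 2) x := by
      simpa using hasDerivAt_pow 3 x
    have hd := hnum.div hden (by positivity : x ^ 3 ≠ 0)
    rw [show deriv (fun x : ℝ => (Real.sin x - x * Real.cos x) / x ^ 3) x = _ from hd.deriv]
    have hm := m_neg x hx
    apply div_neg_of_neg_of_pos
    · have key2 : x ^ 2 * ((x ^ 2 - 3) * Real.sin x + 3 * x * Real.cos x) < 0 :=
        mul_neg_of_pos_of_neg (pow_pos hx.1 2) hm
      nlinarith [key2]
    · exact pow_pos (pow_pos hx.1 3) 2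

/-- With `h(λ) = sin λ / λ` and `k(λ) = sin λ - λ cos λ`, the function `λ ↦ h(λ)k(λ)/λ³` is
positive and strictly decreasing on `(0, π)`. -/
theorem hk_div_cube_pos_and_strictAntiOn
    (h k : ℝ → ℝ)
    (hh : ∀ x : ℝ, h x = Real.sin x / x)
    (hk : ∀ x : ℝ, k x = Real.sin x - x * Real.cos x) :
    (∀ x ∈ Set.Ioo (0 : ℝ) Real.pi, 0 < h x * k x / x ^ 3) ∧
      StrictAntiOn (fun x : ℝ => h x * k x / x ^ 3) (Set.Ioo (0 : ℝ) Real.pi) := by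
  have key : ∀ x ∈ Set.Ioo (0:ℝ) Real.pi,
      h x * k x / x ^ 3 = (Real.sin x / x) * ((Real.sin x - x * Real.cos x) / x ^ 3) := by
    intro x hx
    rw [hh, hk]
    field_simp
  have Apos : ∀ x ∈ Set.Ioo (0:ℝ) Real.pi, 0 < Real.sin x / x := by
    intro x hx
    exact div_pos (Real.sin_pos_of_pos_of_lt_pi hx.1 hx.2) hx.1
  have Bpos : ∀ x ∈ Set.Ioo (0:ℝ) Real.pi, 0 < (Real.sin x - x * Real.cos x) / x ^ 3 := by
    intro x hx
    exact div_pos (k_pos x hx) (pow_pos hx.1 3)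
  constructor
  · intro x hx
    rw [key x hx]
    exact mul_pos (Apos x hx) (Bpos x hx)
  · intro x hx y hy hxy
    simp only
    rw [key x hx, key y hy]
    calc Real.sin y / y * ((Real.sin y - y * Real.cos y) / y ^ 3)
        < Real.sin x / x * ((Real.sin y - y * Real.cos y) / y ^ 3) :=
          mul_lt_mul_of_pos_right (A_anti hx hy hxy) (Bpos y hy)
      _ < Real.sin x / x * ((Real.sin x - x * Real.cos x) / x ^ 3) :=
          mul_lt_mul_of_pos_left (B_anti hx hy hxy) (Apos x hx)
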